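/- (Gradient norm bound) Let ρ★ = U★ U★^H where U★ ∈ ℂ^{D×r} satisfies ‖U★‖_F = 1, and suppose the measurement map 𝒜 satisfies the (3r, δ)-RIP. Let ŷ ∈ ℝ^K, e_k = ŷ_k − trace(A_k ρ★). If U ∈ ℂ^{D×r} satisfies min_{R' unitary} ‖U − U★R'‖_F ≤ σ_r(U★)/4, then ‖G(U)‖_F² ≤ (25/8)·(1 + 2δ)²·‖U U^H − ρ★‖_F² + (25 D²/(8 K²))·‖𝒜*(e)‖². -/

import Mathlib

open Matrix
open scoped BigOperators ComplexOrder

/-- Frobenius norm of a complex matrix. -/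
noncomputable def frobNorm {m n : ℕ} (A : Matrix (Fin m) (Fin n) ℂ) : ℝ :=
  Real.sqrt (∑ i, ∑ j, ‖A i j‖ ^ 2)

/-- Spectral norm (largest singular value) of a complex matrix, as the operator
norm of the induced map between Euclidean spaces. -/
noncomputable def specNorm {m n : ℕ} (A : Matrix (Fin m) (Fin n) ℂ) : ℝ :=
  ‖LinearMap.toContinuousLinearMap (Matrix.toEuclideanLin A)‖

/-- The measurement map `𝒜(ρ)_k = trace (A k * ρ)` satisfies the `(s, δ)`-RIP. -/
def IsRIP {D K : ℕ} (A : Fin K → Matrix (Fin D) (Fin D) ℂ) (s : ℕ) (δ : ℝ) : Prop :=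
  ∀ ρ : Matrix (Fin D) (Fin D) ℂ, ρ.rank ≤ s →
    (1 - δ) * frobNorm ρ ^ 2 ≤ ((D : ℝ) / (K : ℝ)) * ∑ k, ‖Matrix.trace (A k * ρ)‖ ^ 2 ∧
      ((D : ℝ) / (K : ℝ)) * ∑ k, ‖Matrix.trace (A k * ρ)‖ ^ 2 ≤ (1 + δ) * frobNorm ρ ^ 2

/-- The adjoint of the measurement map: `𝒜*(e) = Σ_k e_k A_k`. -/
noncomputable def adjointMap {D K : ℕ} (A : Fin K → Matrix (Fin D) (Fin D) ℂ)
    (e : Fin K → ℝ) : Matrix (Fin D) (Fin D) ℂ :=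
  ∑ k, (e k : ℂ) • A k

/-- The Wirtinger gradient `G(U) = (D/K) Σ_k (trace(A_k U Uᴴ) − ŷ_k) A_k U`. -/
noncomputable def wGrad {D K r : ℕ} (A : Fin K → Matrix (Fin D) (Fin D) ℂ)
    (yhat : Fin K → ℝ) (U : Matrix (Fin D) (Fin r) ℂ) : Matrix (Fin D) (Fin r) ℂ :=
  ((D : ℂ) / (K : ℂ)) • ∑ k, (Matrix.trace (A k * (U * Uᴴ)) - (yhat k : ℂ)) • (A k * U)

/-- The Wirtinger Hessian quadratic form at `U` in direction `Δ`. -/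
noncomputable def wHess {D K r : ℕ} (A : Fin K → Matrix (Fin D) (Fin D) ℂ)
    (yhat : Fin K → ℝ) (U Δ : Matrix (Fin D) (Fin r) ℂ) : ℝ :=
  (2 * (D : ℝ) / (K : ℝ)) * ∑ k, (‖Matrix.trace (A k * (U * Δᴴ))‖ ^ 2
      + ((Matrix.trace (A k * (U * Δᴴ))) ^ 2).re)
    + (2 * (D : ℝ) / (K : ℝ)) *
      (Matrix.trace ((∑ k, (Matrix.trace (A k * (U * Uᴴ)) - (yhat k : ℂ)) • A k)
        * (Δ * Δᴴ))).re

/-- The function `h(δ)` from the recovery-error bound. -/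
noncomputable def hfun (δ : ℝ) : ℝ :=
  (Real.sqrt 2 + Real.sqrt (82.55 - 762.54 * δ - 843.09 * δ ^ 2)) / (1.5 - 15.7 * δ)

/-- The smallest singular value `σ_r(X)`: the square root of the smallest
eigenvalue of `Xᴴ X`. -/
noncomputable def sigmaMin {D r : ℕ} (X : Matrix (Fin D) (Fin r) ℂ) : ℝ :=
  Real.sqrt (⨅ i : Fin r, (Matrix.isHermitian_conjTranspose_mul_self X).eigenvalues i)

open scoped InnerProductSpace ComplexConjugate Matrix.Norms.L2Operator

section Aux

lemma specNorm_eq {m n : ℕ} (A : Matrix (Fin m) (Fin n) ℂ) : specNorm A = ‖A‖ := rfl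

noncomputable def toE {m n : ℕ} (A : Matrix (Fin m) (Fin n) ℂ) :
    EuclideanSpace ℂ (Fin m × Fin n) := WithLp.toLp 2 (fun p => A p.1 p.2)


lemma toE_add {m n : ℕ} (A B : Matrix (Fin m) (Fin n) ℂ) : toE (A + B) = toE A + toE B := rfl
lemma toE_sub {m n : ℕ} (A B : Matrix (Fin m) (Fin n) ℂ) : toE (A - B) = toE A - toE B := rfl
lemma toE_smul {m n : ℕ} (c : ℂ) (A : Matrix (Fin m) (Fin n) ℂ) : toE (c • A) = c • toE A := rfl

lemma frobNorm_eq {m n : ℕ} (A : Matrix (Fin m) (Fin n) ℂ) : frobNorm A = ‖toE A‖ := by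
  rw [EuclideanSpace.norm_eq, frobNorm]
  congr 1
  exact (Fintype.sum_prod_type (fun p : Fin m × Fin n => ‖A p.1 p.2‖ ^ 2)).symm

lemma frobNorm_nonneg {m n : ℕ} (A : Matrix (Fin m) (Fin n) ℂ) : 0 ≤ frobNorm A :=
  Real.sqrt_nonneg _

lemma frobNorm_sq {m n : ℕ} (A : Matrix (Fin m) (Fin n) ℂ) :
    frobNorm A ^ 2 = ∑ i, ∑ j, ‖A i j‖ ^ 2 :=
  Real.sq_sqrt (Finset.sum_nonneg fun _ _ => Finset.sum_nonneg fun _ _ => sq_nonneg _)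

lemma frobNorm_sq_eq_re_trace {m n : ℕ} (A : Matrix (Fin m) (Fin n) ℂ) :
    frobNorm A ^ 2 = (Matrix.trace (Aᴴ * A)).re := by
  rw [frobNorm_sq, Matrix.trace]
  rw [Complex.re_sum]
  rw [Finset.sum_comm]
  refine Finset.sum_congr rfl fun i _ => ?_
  rw [Matrix.diag_apply, Matrix.mul_apply, Complex.re_sum]
  refine Finset.sum_congr rfl fun j _ => ?_
  simp [Matrix.conjTranspose_apply, ← Complex.normSq_eq_norm_sq,
    Complex.normSq_apply, Complex.mul_re]


lemma matRank_add_le {m n : ℕ} (A B : Matrix (Fin m) (Fin n) ℂ) :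
    (A + B).rank ≤ A.rank + B.rank := by
  classical
  rw [Matrix.rank, Matrix.rank, Matrix.rank]
  have hr : LinearMap.range (A + B).mulVecLin ≤
      LinearMap.range A.mulVecLin ⊔ LinearMap.range B.mulVecLin := by
    rintro _ ⟨x, rfl⟩
    refine Submodule.mem_sup.2 ⟨A.mulVecLin x, ⟨x, rfl⟩, B.mulVecLin x, ⟨x, rfl⟩, ?_⟩
    simp [Matrix.mulVecLin, Matrix.add_mulVec]
  exact (Submodule.finrank_mono hr).trans
    (Submodule.finrank_add_le_finrank_add_finrank _ _)

lemma matRank_smul_le {m n : ℕ} (c : ℂ) (A : Matrix (Fin m) (Fin n) ℂ) :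
    (c • A).rank ≤ A.rank := by
  classical
  rw [Matrix.rank, Matrix.rank]
  have hr : LinearMap.range (c • A).mulVecLin ≤ LinearMap.range A.mulVecLin := by
    rintro _ ⟨x, rfl⟩
    refine ⟨c • x, ?_⟩
    simp [Matrix.mulVecLin_apply, Matrix.smul_mulVec, Matrix.mulVec_smul]
  exact Submodule.finrank_mono hr

lemma matRank_sub_le {m n : ℕ} (A B : Matrix (Fin m) (Fin n) ℂ) :
    (A - B).rank ≤ A.rank + B.rank := by
  have h := matRank_add_le A ((-1 : ℂ) • B)
  have h2 := matRank_smul_le (-1 : ℂ) B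
  have : A - B = A + (-1 : ℂ) • B := by simp [sub_eq_add_neg]
  rw [this]
  omega

lemma matRank_vecMulVec_le {m : ℕ} (x y : Fin m → ℂ) :
    (Matrix.vecMulVec x y).rank ≤ 1 := by
  rw [Matrix.vecMulVec_eq (Fin 1)]
  calc (Matrix.replicateCol (Fin 1) x * Matrix.replicateRow (Fin 1) y).rank ≤ (Matrix.replicateCol (Fin 1) x).rank :=
        Matrix.rank_mul_le_left _ _
    _ ≤ Fintype.card (Fin 1) := Matrix.rank_le_card_width _
    _ = 1 := by simp


lemma l2_opNorm_diagonal_le {D : ℕ} (d : Fin D → ℝ) {C : ℝ} (hC : 0 ≤ C)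
    (h : ∀ i, |d i| ≤ C) :
    ‖(Matrix.diagonal (fun i => (d i : ℂ)) : Matrix (Fin D) (Fin D) ℂ)‖ ≤ C := by
  rw [Matrix.l2_opNorm_def]
  refine ContinuousLinearMap.opNorm_le_bound _ hC fun x => ?_
  have hx : ∀ (y : EuclideanSpace ℂ (Fin D)), ‖y‖ = Real.sqrt (∑ i, ‖y i‖ ^ 2) :=
    fun y => EuclideanSpace.norm_eq y
  rw [hx, hx]
  rw [← Real.sqrt_sq hC, ← Real.sqrt_mul (sq_nonneg C)]
  apply Real.sqrt_le_sqrt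
  rw [Finset.mul_sum]
  apply Finset.sum_le_sum
  intro i _
  have : ((LinearEquiv.trans Matrix.toEuclideanLin LinearMap.toContinuousLinearMap)
      (Matrix.diagonal (fun i => (d i : ℂ))) x) i = (d i : ℂ) * x i := by
    show (Matrix.diagonal (fun i => (d i : ℂ)) *ᵥ (fun j => x j)) i = _
    simp [Matrix.mulVec, dotProduct, Matrix.diagonal]
  rw [this]
  rw [norm_mul, mul_pow]
  have h1 : ‖(d i : ℂ)‖ ^ 2 ≤ C ^ 2 := by
    rw [Complex.norm_real]
    calc ‖d i‖ ^ 2 = |d i| ^ 2 := by rw [Real.norm_eq_abs]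
      _ ≤ C ^ 2 := by nlinarith [h i, abs_nonneg (d i)]
  exact mul_le_mul_of_nonneg_right h1 (sq_nonneg _)

lemma hermitian_opNorm_le {D : ℕ} (hD : 0 < D) {M : Matrix (Fin D) (Fin D) ℂ}
    (hM : M.IsHermitian) {C : ℝ} (hC : 0 ≤ C)
    (h : ∀ i, |hM.eigenvalues i| ≤ C) : ‖M‖ ≤ C := by
  haveI : Nonempty (Fin D) := ⟨⟨0, hD⟩⟩
  have hspec := hM.spectral_theorem
  rw [Unitary.conjStarAlgAut_apply] at hspec
  have hV : ‖((hM.eigenvectorUnitary : Matrix (Fin D) (Fin D) ℂ))‖ = 1 :=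
    CStarRing.norm_coe_unitary hM.eigenvectorUnitary
  have hVs : ‖(star (hM.eigenvectorUnitary : Matrix (Fin D) (Fin D) ℂ))‖ = 1 := by
    rw [Matrix.star_eq_conjTranspose, Matrix.l2_opNorm_conjTranspose]
    exact hV
  have hdiag : ‖(Matrix.diagonal (RCLike.ofReal ∘ hM.eigenvalues) : Matrix (Fin D) (Fin D) ℂ)‖ ≤ C := by
    exact l2_opNorm_diagonal_le hM.eigenvalues hC h
  calc ‖M‖ = ‖(hM.eigenvectorUnitary : Matrix (Fin D) (Fin D) ℂ) *
        (Matrix.diagonal (RCLike.ofReal ∘ hM.eigenvalues) *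
          star (hM.eigenvectorUnitary : Matrix (Fin D) (Fin D) ℂ))‖ := by
        rw [← Matrix.mul_assoc, ← hspec]
    _ ≤ ‖(hM.eigenvectorUnitary : Matrix (Fin D) (Fin D) ℂ)‖ *
        ‖Matrix.diagonal (RCLike.ofReal ∘ hM.eigenvalues) *
          star (hM.eigenvectorUnitary : Matrix (Fin D) (Fin D) ℂ)‖ := Matrix.l2_opNorm_mul _ _
    _ ≤ 1 * (‖(Matrix.diagonal (RCLike.ofReal ∘ hM.eigenvalues) : Matrix (Fin D) (Fin D) ℂ)‖ *
        ‖star (hM.eigenvectorUnitary : Matrix (Fin D) (Fin D) ℂ)‖) := by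
        rw [hV]
        exact mul_le_mul_of_nonneg_left (Matrix.l2_opNorm_mul _ _) (by norm_num)
    _ ≤ C := by rw [hVs, one_mul, mul_one]; exact hdiag

lemma trace_eq_sum_eigs {D : ℕ} {M : Matrix (Fin D) (Fin D) ℂ} (hM : M.IsHermitian) :
    Matrix.trace M = ∑ i, (hM.eigenvalues i : ℂ) := by
  have h := hM.spectral_theorem
  rw [Unitary.conjStarAlgAut_apply] at h
  have hstar : (hM.eigenvectorUnitary : Matrix (Fin D) (Fin D) ℂ) *
      star (hM.eigenvectorUnitary : Matrix (Fin D) (Fin D) ℂ) = 1 :=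
    Matrix.mem_unitaryGroup_iff.mp hM.eigenvectorUnitary.2
  have hstar' : star (hM.eigenvectorUnitary : Matrix (Fin D) (Fin D) ℂ) *
      (hM.eigenvectorUnitary : Matrix (Fin D) (Fin D) ℂ) = 1 :=
    Matrix.mem_unitaryGroup_iff'.mp hM.eigenvectorUnitary.2
  calc Matrix.trace M = Matrix.trace ((hM.eigenvectorUnitary : Matrix (Fin D) (Fin D) ℂ) *
        Matrix.diagonal (RCLike.ofReal ∘ hM.eigenvalues) *
        star (hM.eigenvectorUnitary : Matrix (Fin D) (Fin D) ℂ)) := by rw [← h]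
    _ = Matrix.trace (star (hM.eigenvectorUnitary : Matrix (Fin D) (Fin D) ℂ) *
        ((hM.eigenvectorUnitary : Matrix (Fin D) (Fin D) ℂ) *
          Matrix.diagonal (RCLike.ofReal ∘ hM.eigenvalues))) := by
        rw [Matrix.trace_mul_comm]
    _ = Matrix.trace (Matrix.diagonal (RCLike.ofReal ∘ hM.eigenvalues)) := by
        rw [← Matrix.mul_assoc, Matrix.trace_mul_comm, hstar', Matrix.mul_one]
    _ = ∑ i, (hM.eigenvalues i : ℂ) := by simp [Matrix.trace_diagonal]

lemma trace_mul_real {D : ℕ} {A Z : Matrix (Fin D) (Fin D) ℂ}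
    (hA : A.IsHermitian) (hZ : Z.IsHermitian) :
    conj (Matrix.trace (A * Z)) = Matrix.trace (A * Z) := by
  calc conj (Matrix.trace (A * Z)) = Matrix.trace ((A * Z)ᴴ) :=
        (Matrix.trace_conjTranspose (A * Z)).symm
    _ = Matrix.trace (Zᴴ * Aᴴ) := by rw [Matrix.conjTranspose_mul]
    _ = Matrix.trace (Z * A) := by rw [hA.eq, hZ.eq]
    _ = Matrix.trace (A * Z) := Matrix.trace_mul_comm _ _

lemma quad_eq_trace {D : ℕ} (A : Matrix (Fin D) (Fin D) ℂ) (x : Fin D → ℂ) :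
    dotProduct (star x) (A *ᵥ x) =
      Matrix.trace (A * Matrix.vecMulVec x (star x)) := by
  rw [Matrix.trace]
  simp only [dotProduct, Matrix.mulVec, Matrix.diag_apply, Matrix.mul_apply,
    Matrix.vecMulVec_apply, Pi.star_apply, dotProduct]
  refine Finset.sum_congr rfl fun a _ => ?_
  rw [Finset.mul_sum]
  refine Finset.sum_congr rfl fun b _ => ?_
  ring

noncomputable def mAv {D K : ℕ} (A : Fin K → Matrix (Fin D) (Fin D) ℂ)
    (ρ : Matrix (Fin D) (Fin D) ℂ) : EuclideanSpace ℂ (Fin K) :=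
  WithLp.toLp 2 (fun k => Matrix.trace (A k * ρ))

lemma mAv_add {D K : ℕ} (A : Fin K → Matrix (Fin D) (Fin D) ℂ) (ρ σ : Matrix (Fin D) (Fin D) ℂ) :
    mAv A (ρ + σ) = mAv A ρ + mAv A σ := by
  ext k
  show Matrix.trace (A k * (ρ + σ)) = Matrix.trace (A k * ρ) + Matrix.trace (A k * σ)
  rw [Matrix.mul_add, Matrix.trace_add]

lemma mAv_sub {D K : ℕ} (A : Fin K → Matrix (Fin D) (Fin D) ℂ) (ρ σ : Matrix (Fin D) (Fin D) ℂ) :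
    mAv A (ρ - σ) = mAv A ρ - mAv A σ := by
  ext k
  show Matrix.trace (A k * (ρ - σ)) = Matrix.trace (A k * ρ) - Matrix.trace (A k * σ)
  rw [Matrix.mul_sub, Matrix.trace_sub]

lemma mAv_norm_sq {D K : ℕ} (A : Fin K → Matrix (Fin D) (Fin D) ℂ)
    (ρ : Matrix (Fin D) (Fin D) ℂ) :
    ‖mAv A ρ‖ ^ 2 = ∑ k, ‖Matrix.trace (A k * ρ)‖ ^ 2 := by
  rw [EuclideanSpace.norm_eq]
  exact Real.sq_sqrt (Finset.sum_nonneg fun _ _ => sq_nonneg _)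

lemma rip' {D K r : ℕ} {A : Fin K → Matrix (Fin D) (Fin D) ℂ} {δ : ℝ}
    (hRIP : IsRIP A (3 * r) δ) (ρ : Matrix (Fin D) (Fin D) ℂ) (hrk : ρ.rank ≤ 3 * r) :
    (1 - δ) * ‖toE ρ‖ ^ 2 ≤ ((D : ℝ) / (K : ℝ)) * ‖mAv A ρ‖ ^ 2 ∧
      ((D : ℝ) / (K : ℝ)) * ‖mAv A ρ‖ ^ 2 ≤ (1 + δ) * ‖toE ρ‖ ^ 2 := by
  have h := hRIP ρ hrk
  rw [← frobNorm_eq, mAv_norm_sq]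
  exact h

lemma polar {D K r : ℕ} {A : Fin K → Matrix (Fin D) (Fin D) ℂ} {δ : ℝ} (hδ0 : 0 ≤ δ)
    (hRIP : IsRIP A (3 * r) δ) {Z W : Matrix (Fin D) (Fin D) ℂ}
    (h1 : (Z + W).rank ≤ 3 * r) (h2 : (Z - W).rank ≤ 3 * r)
    (hZ : ‖toE Z‖ = 1) (hW : ‖toE W‖ = 1) :
    |((D : ℝ) / (K : ℝ)) * RCLike.re ⟪mAv A Z, mAv A W⟫_ℂ| ≤ 1 + δ := by
  obtain ⟨l1, u1⟩ := rip' hRIP (Z + W) h1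
  obtain ⟨l2, u2⟩ := rip' hRIP (Z - W) h2
  rw [mAv_add] at l1 u1
  rw [mAv_sub] at l2 u2
  rw [toE_add] at l1 u1
  rw [toE_sub] at l2 u2
  set κ := (D : ℝ) / (K : ℝ) with hκ
  have hκ0 : 0 ≤ κ := div_nonneg (Nat.cast_nonneg _) (Nat.cast_nonneg _)
  set P := RCLike.re ⟪mAv A Z, mAv A W⟫_ℂ with hP
  set p := RCLike.re ⟪toE Z, toE W⟫_ℂ with hp
  have key1 : κ * ‖mAv A Z + mAv A W‖ ^ 2 - κ * ‖mAv A Z - mAv A W‖ ^ 2 = 4 * (κ * P) := by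
    rw [norm_add_sq (𝕜 := ℂ), norm_sub_sq (𝕜 := ℂ)]
    ring
  have key2 : ‖toE Z + toE W‖ ^ 2 - ‖toE Z - toE W‖ ^ 2 = 4 * p := by
    rw [norm_add_sq (𝕜 := ℂ), norm_sub_sq (𝕜 := ℂ)]
    ring
  have key3 : ‖toE Z + toE W‖ ^ 2 + ‖toE Z - toE W‖ ^ 2 = 4 := by
    rw [norm_add_sq (𝕜 := ℂ), norm_sub_sq (𝕜 := ℂ), hZ, hW]
    ring
  have hpb : |p| ≤ 1 := by
    have h1 := RCLike.abs_re_le_norm (⟪toE Z, toE W⟫_ℂ)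
    have h2 := norm_inner_le_norm (𝕜 := ℂ) (toE Z) (toE W)
    rw [hZ, hW] at h2
    have h3 := h1.trans h2
    rw [mul_one] at h3
    exact h3
  have hd1 : δ * ‖toE Z + toE W‖ ^ 2 + δ * ‖toE Z - toE W‖ ^ 2 = 4 * δ := by
    rw [← mul_add, key3]; ring
  rw [abs_le] at hpb ⊢
  constructor <;> nlinarith [hpb.1, hpb.2]

end Aux


section SpecM
variable {D K r : ℕ}

lemma MZ_hermitian {A : Fin K → Matrix (Fin D) (Fin D) ℂ} (hA : ∀ k, (A k).IsHermitian)
    {Z : Matrix (Fin D) (Fin D) ℂ} (hZ : Z.IsHermitian) :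
    (∑ k, Matrix.trace (A k * Z) • A k).IsHermitian := by
  show (∑ k, Matrix.trace (A k * Z) • A k)ᴴ = _
  rw [Matrix.conjTranspose_sum]
  refine Finset.sum_congr rfl fun k _ => ?_
  rw [Matrix.conjTranspose_smul, (hA k).eq]
  congr 1
  exact trace_mul_real (hA k) hZ

lemma specM_le_of_norm_one (hD : 0 < D) (hK : 0 < K) (hr : 0 < r)
    {A : Fin K → Matrix (Fin D) (Fin D) ℂ} (hA : ∀ k, (A k).IsHermitian)
    {δ : ℝ} (hδ0 : 0 ≤ δ) (hRIP : IsRIP A (3 * r) δ)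
    {Z : Matrix (Fin D) (Fin D) ℂ} (hZh : Z.IsHermitian) (hZrank : Z.rank ≤ 2 * r)
    (hZ1 : frobNorm Z = 1) :
    specNorm (∑ k, Matrix.trace (A k * Z) • A k) ≤ ((K : ℝ) / (D : ℝ)) * (1 + δ) := by
  have hκ : (0 : ℝ) < (D : ℝ) / (K : ℝ) :=
    div_pos (Nat.cast_pos.2 hD) (Nat.cast_pos.2 hK)
  set M := ∑ k, Matrix.trace (A k * Z) • A k with hMdef
  have hMh : M.IsHermitian := MZ_hermitian hA hZh
  have hC : (0 : ℝ) ≤ ((K : ℝ) / (D : ℝ)) * (1 + δ) := by positivity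
  rw [specNorm_eq]
  refine hermitian_opNorm_le hD hMh hC fun i => ?_
  set v : Fin D → ℂ := ⇑(hMh.eigenvectorBasis i) with hv
  have hvnorm : ∑ a, ‖v a‖ ^ 2 = 1 := by
    have h1 : ‖hMh.eigenvectorBasis i‖ = 1 := hMh.eigenvectorBasis.orthonormal.1 i
    have h2 : (∑ a, ‖v a‖ ^ 2) = ‖hMh.eigenvectorBasis i‖ ^ 2 := by
      rw [EuclideanSpace.norm_eq,
        Real.sq_sqrt (Finset.sum_nonneg fun _ _ => sq_nonneg _)]
    rw [h2, h1, one_pow]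
  set W := Matrix.vecMulVec v (star v) with hW
  have hWh : W.IsHermitian := by
    show Wᴴ = W
    ext a b
    simp [hW, Matrix.conjTranspose_apply, Matrix.vecMulVec_apply, mul_comm]
  have hWnorm : ‖toE W‖ = 1 := by
    have hsq : ‖toE W‖ ^ 2 = 1 := by
      rw [← frobNorm_eq, frobNorm_sq]
      calc ∑ a, ∑ b, ‖W a b‖ ^ 2 = ∑ a, ∑ b, ‖v a‖ ^ 2 * ‖v b‖ ^ 2 := by
            refine Finset.sum_congr rfl fun a _ => Finset.sum_congr rfl fun b _ => ?_
            simp [hW, Matrix.vecMulVec_apply, norm_mul, mul_pow]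
        _ = (∑ a, ‖v a‖ ^ 2) * (∑ b, ‖v b‖ ^ 2) := by rw [Finset.sum_mul_sum]
        _ = 1 := by rw [hvnorm]; ring
    have h0 : (0 : ℝ) ≤ ‖toE W‖ := norm_nonneg _
    nlinarith
  have hZE : ‖toE Z‖ = 1 := by rw [← frobNorm_eq]; exact hZ1
  have hWrank : W.rank ≤ 1 := matRank_vecMulVec_le v (star v)
  have hrank1 : (Z + W).rank ≤ 3 * r := by
    have h3 := matRank_add_le Z W
    have : Z.rank + W.rank ≤ 2 * r + 1 := by linarith
    calc (Z + W).rank ≤ 2 * r + 1 := le_trans h3 this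
      _ ≤ 3 * r := by omega
  have hrank2 : (Z - W).rank ≤ 3 * r := by
    have h3 := matRank_sub_le Z W
    have : Z.rank + W.rank ≤ 2 * r + 1 := by linarith
    calc (Z - W).rank ≤ 2 * r + 1 := le_trans h3 this
      _ ≤ 3 * r := by omega
  have hquad : dotProduct (star v) (M *ᵥ v) = ⟪mAv A Z, mAv A W⟫_ℂ := by
    rw [quad_eq_trace M v]
    have hlhs : Matrix.trace (M * W) = ∑ k, Matrix.trace (A k * Z) * Matrix.trace (A k * W) := by
      rw [hMdef, Finset.sum_mul, Matrix.trace_sum]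
      refine Finset.sum_congr rfl fun k _ => ?_
      rw [smul_mul_assoc, Matrix.trace_smul, smul_eq_mul]
    have hrhs : ⟪mAv A Z, mAv A W⟫_ℂ
        = ∑ k, conj (Matrix.trace (A k * Z)) * Matrix.trace (A k * W) := by
      rw [PiLp.inner_apply]
      refine Finset.sum_congr rfl fun k _ => ?_
      rw [RCLike.inner_apply']
      rfl
    rw [hlhs, hrhs]
    refine Finset.sum_congr rfl fun k _ => ?_
    rw [trace_mul_real (hA k) hZh]
  have heig : hMh.eigenvalues i = RCLike.re ⟪mAv A Z, mAv A W⟫_ℂ := by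
    rw [hMh.eigenvalues_eq i, ← hv, hquad]
  have hpol := polar hδ0 hRIP hrank1 hrank2 hZE hWnorm
  rw [← heig, abs_mul, abs_of_pos hκ] at hpol
  have hK0 : ((K : ℝ)) ≠ 0 := Nat.cast_ne_zero.2 hK.ne'
  have hD0 : ((D : ℝ)) ≠ 0 := Nat.cast_ne_zero.2 hD.ne'
  have hid : (K : ℝ) / (D : ℝ) * (1 + δ) = (1 + δ) / ((D : ℝ) / (K : ℝ)) := by
    field_simp
  have h2 : |hMh.eigenvalues i| * ((D : ℝ) / (K : ℝ)) ≤ 1 + δ := by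
    rw [mul_comm]; exact hpol
  rw [hid, le_div_iff₀ hκ]
  exact h2
end SpecM


section Final
variable {D K r : ℕ}

lemma specM_le (hD : 0 < D) (hK : 0 < K) (hr : 0 < r)
    {A : Fin K → Matrix (Fin D) (Fin D) ℂ} (hA : ∀ k, (A k).IsHermitian)
    {δ : ℝ} (hδ0 : 0 ≤ δ) (hRIP : IsRIP A (3 * r) δ)
    {Z : Matrix (Fin D) (Fin D) ℂ} (hZh : Z.IsHermitian) (hZrank : Z.rank ≤ 2 * r) :
    ((D : ℝ) / (K : ℝ)) * specNorm (∑ k, Matrix.trace (A k * Z) • A k) ≤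
      (1 + 2 * δ) * frobNorm Z := by
  have hκ : (0 : ℝ) < (D : ℝ) / (K : ℝ) :=
    div_pos (Nat.cast_pos.2 hD) (Nat.cast_pos.2 hK)
  rcases eq_or_lt_of_le (frobNorm_nonneg Z) with hc | hc
  · -- frobNorm Z = 0, so Z = 0
    have hZ0 : Z = 0 := by
      have hs : (∑ i, ∑ j, ‖Z i j‖ ^ 2) = 0 := by
        have h1 := frobNorm_sq Z
        rw [← hc] at h1
        simpa using h1.symm
      ext i j
      have hz : ∀ i ∈ (Finset.univ : Finset (Fin D)), (∑ j, ‖Z i j‖ ^ 2) = 0 :=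
        (Finset.sum_eq_zero_iff_of_nonneg
          (fun i _ => Finset.sum_nonneg fun j _ => sq_nonneg ‖Z i j‖)).1 hs
      have hz2 := (Finset.sum_eq_zero_iff_of_nonneg (fun j _ => sq_nonneg ‖Z i j‖)).1
        (hz i (Finset.mem_univ i)) j (Finset.mem_univ j)
      have h3 : ‖Z i j‖ = 0 := by nlinarith [norm_nonneg (Z i j)]
      simpa using norm_eq_zero.1 h3
    rw [hZ0]
    simp only [Matrix.mul_zero, Matrix.trace_zero, zero_smul, Finset.sum_const_zero]
    have h1 : specNorm (0 : Matrix (Fin D) (Fin D) ℂ) = 0 := by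
      rw [specNorm_eq]; exact norm_zero
    rw [h1, mul_zero]
    exact mul_nonneg (by linarith) (frobNorm_nonneg 0)
  · set c := frobNorm Z with hcdef
    have hcne : (c : ℝ) ≠ 0 := hc.ne'
    set Z' := (((c⁻¹ : ℝ) : ℂ)) • Z with hZ'def
    have hZ'h : Z'.IsHermitian := by
      show Z'ᴴ = Z'
      rw [hZ'def, Matrix.conjTranspose_smul, hZh.eq]
      congr 1
      exact Complex.conj_ofReal _
    have hZ'rank : Z'.rank ≤ 2 * r := le_trans (matRank_smul_le _ _) hZrank
    have hZ'1 : frobNorm Z' = 1 := by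
      rw [hZ'def, frobNorm_eq, toE_smul, norm_smul, ← frobNorm_eq]
      rw [Complex.norm_real, Real.norm_eq_abs, abs_of_pos (inv_pos.2 hc)]
      rw [← hcdef]
      field_simp
    have hMZ : (∑ k, Matrix.trace (A k * Z) • A k) =
        ((c : ℂ)) • ∑ k, Matrix.trace (A k * Z') • A k := by
      rw [Finset.smul_sum]
      refine Finset.sum_congr rfl fun k _ => ?_
      rw [hZ'def, Matrix.mul_smul, Matrix.trace_smul, smul_eq_mul, smul_smul, ← mul_assoc]
      rw [← Complex.ofReal_mul]
      rw [mul_inv_cancel₀ hcne]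
      simp
    have hspec := specM_le_of_norm_one hD hK hr hA hδ0 hRIP hZ'h hZ'rank hZ'1
    have hnorm : specNorm (∑ k, Matrix.trace (A k * Z) • A k) =
        c * specNorm (∑ k, Matrix.trace (A k * Z') • A k) := by
      rw [hMZ, specNorm_eq, specNorm_eq, norm_smul, Complex.norm_real, Real.norm_eq_abs,
        abs_of_pos hc]
    rw [hnorm]
    have hK0 : ((K : ℝ)) ≠ 0 := Nat.cast_ne_zero.2 hK.ne'
    have hD0 : ((D : ℝ)) ≠ 0 := Nat.cast_ne_zero.2 hD.ne'
    have hstep : (D : ℝ) / K * (c * specNorm (∑ k, Matrix.trace (A k * Z') • A k)) ≤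
        (D : ℝ) / K * (c * ((K : ℝ) / (D : ℝ) * (1 + δ))) := by
      apply mul_le_mul_of_nonneg_left _ hκ.le
      exact mul_le_mul_of_nonneg_left hspec hc.le
    have hid : (D : ℝ) / K * (c * ((K : ℝ) / (D : ℝ) * (1 + δ))) = c * (1 + δ) := by
      field_simp
    rw [hid] at hstep
    calc (D : ℝ) / K * (c * specNorm (∑ k, Matrix.trace (A k * Z') • A k)) ≤ c * (1 + δ) := hstep
      _ ≤ (1 + 2 * δ) * c := by nlinarith
end Final


section Helpers
variable {D K r : ℕ}

lemma frobNorm_smul (c : ℂ) {m n : ℕ} (X : Matrix (Fin m) (Fin n) ℂ) :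
    frobNorm (c • X) = ‖c‖ * frobNorm X := by
  rw [frobNorm_eq, frobNorm_eq, toE_smul, norm_smul]

lemma frobNorm_sub_le {m n : ℕ} (X Y : Matrix (Fin m) (Fin n) ℂ) :
    frobNorm (X - Y) ≤ frobNorm X + frobNorm Y := by
  rw [frobNorm_eq, frobNorm_eq, frobNorm_eq, toE_sub]
  exact norm_sub_le _ _

lemma sq_le_of_nonneg {a b : ℝ} (_ha : 0 ≤ a) (hb : 0 ≤ b) (h : a ^ 2 ≤ b ^ 2) : a ≤ b := by
  nlinarith

lemma frobNorm_mul_le {m : ℕ} (B : Matrix (Fin D) (Fin D) ℂ) (X : Matrix (Fin D) (Fin m) ℂ) :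
    frobNorm (B * X) ≤ specNorm B * frobNorm X := by
  have hB0 : 0 ≤ specNorm B := by rw [specNorm_eq]; exact norm_nonneg _
  refine sq_le_of_nonneg (frobNorm_nonneg _) (mul_nonneg hB0 (frobNorm_nonneg _)) ?_
  rw [frobNorm_sq, mul_pow, frobNorm_sq]
  have hL : (∑ i, ∑ j, ‖(B * X) i j‖ ^ 2) = ∑ j, ∑ i, ‖(B * X) i j‖ ^ 2 := Finset.sum_comm
  have hR : (∑ i, ∑ j, ‖X i j‖ ^ 2) = ∑ j, ∑ i, ‖X i j‖ ^ 2 := Finset.sum_comm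
  rw [hL, hR, Finset.mul_sum]
  apply Finset.sum_le_sum
  intro j _
  set xj : EuclideanSpace ℂ (Fin D) := WithLp.toLp 2 (fun b => X b j) with hxj
  have hcol : ∀ i, (B * X) i j = (B *ᵥ xj) i := by
    intro i
    simp [Matrix.mul_apply, Matrix.mulVec, dotProduct, hxj]
  have hle := Matrix.l2_opNorm_mulVec B xj
  have hnorm1 : ‖(EuclideanSpace.equiv (Fin D) ℂ).symm (B *ᵥ xj)‖ ^ 2 = ∑ i, ‖(B *ᵥ xj) i‖ ^ 2 := by
    rw [EuclideanSpace.norm_eq]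
    exact Real.sq_sqrt (Finset.sum_nonneg fun _ _ => sq_nonneg _)
  have hnorm2 : ‖xj‖ ^ 2 = ∑ i, ‖X i j‖ ^ 2 := by
    rw [EuclideanSpace.norm_eq]
    exact Real.sq_sqrt (Finset.sum_nonneg fun _ _ => sq_nonneg _)
  calc ∑ i, ‖(B * X) i j‖ ^ 2 = ∑ i, ‖(B *ᵥ xj) i‖ ^ 2 := by
        refine Finset.sum_congr rfl fun i _ => by rw [hcol i]
    _ = ‖(EuclideanSpace.equiv (Fin D) ℂ).symm (B *ᵥ xj)‖ ^ 2 := hnorm1.symm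
    _ ≤ (‖B‖ * ‖xj‖) ^ 2 := by
        have h0 : 0 ≤ ‖(EuclideanSpace.equiv (Fin D) ℂ).symm (B *ᵥ xj)‖ := norm_nonneg _
        nlinarith [hle]
    _ = specNorm B ^ 2 * (∑ i, ‖X i j‖ ^ 2) := by
        rw [mul_pow, hnorm2, specNorm_eq]

lemma sigmaMin_le_one {X : Matrix (Fin D) (Fin r) ℂ} (hr : 0 < r) (hX : frobNorm X = 1) :
    sigmaMin X ≤ 1 := by
  haveI : Nonempty (Fin r) := ⟨⟨0, hr⟩⟩
  set hH := Matrix.isHermitian_conjTranspose_mul_self X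
  have hps : (Xᴴ * X).PosSemidef := Matrix.posSemidef_conjTranspose_mul_self X
  have hnn : ∀ i, 0 ≤ hH.eigenvalues i := fun i => hps.eigenvalues_nonneg i
  have hsum : (∑ i, hH.eigenvalues i) = 1 := by
    have h1 : Matrix.trace (Xᴴ * X) = ∑ i, (hH.eigenvalues i : ℂ) := trace_eq_sum_eigs hH
    have h2 : (Matrix.trace (Xᴴ * X)).re = ∑ i, hH.eigenvalues i := by
      rw [h1, Complex.re_sum]
      exact Finset.sum_congr rfl fun i _ => Complex.ofReal_re _
    rw [← h2, ← frobNorm_sq_eq_re_trace, hX, one_pow]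
  have hinf : (⨅ i, hH.eigenvalues i) ≤ 1 := by
    have h3 : (⨅ i, hH.eigenvalues i) ≤ hH.eigenvalues ⟨0, hr⟩ :=
      ciInf_le (Set.Finite.bddBelow (Set.finite_range _)) _
    have h4 : hH.eigenvalues ⟨0, hr⟩ ≤ ∑ i, hH.eigenvalues i :=
      Finset.single_le_sum (fun i _ => hnn i) (Finset.mem_univ _)
    linarith [hsum ▸ h4]
  rw [sigmaMin]
  calc Real.sqrt (⨅ i, hH.eigenvalues i) ≤ Real.sqrt 1 := Real.sqrt_le_sqrt hinf
    _ = 1 := Real.sqrt_one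

lemma frobNorm_mul_unitary {X : Matrix (Fin D) (Fin r) ℂ} {R : Matrix (Fin r) (Fin r) ℂ}
    (hR : Rᴴ * R = 1) : frobNorm (X * R) = frobNorm X := by
  have hRR : R * Rᴴ = 1 := mul_eq_one_comm.mp hR
  have h1 : frobNorm (X * R) ^ 2 = frobNorm X ^ 2 := by
    rw [frobNorm_sq_eq_re_trace, frobNorm_sq_eq_re_trace]
    congr 1
    calc Matrix.trace ((X * R)ᴴ * (X * R)) = Matrix.trace (Rᴴ * (Xᴴ * (X * R))) := by
          rw [Matrix.conjTranspose_mul, Matrix.mul_assoc]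
      _ = Matrix.trace ((Xᴴ * (X * R)) * Rᴴ) := Matrix.trace_mul_comm _ _
      _ = Matrix.trace (Xᴴ * X) := by
          rw [Matrix.mul_assoc, Matrix.mul_assoc, hRR, Matrix.mul_one]
  have h2 : 0 ≤ frobNorm (X * R) := frobNorm_nonneg _
  have h3 : 0 ≤ frobNorm X := frobNorm_nonneg _
  nlinarith

end Helpers


lemma frobNorm_add_le {m n : ℕ} (X Y : Matrix (Fin m) (Fin n) ℂ) :
    frobNorm (X + Y) ≤ frobNorm X + frobNorm Y := by
  rw [frobNorm_eq, frobNorm_eq, frobNorm_eq, toE_add]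
  exact norm_add_le _ _


/-- Gradient norm bound. -/
theorem stmt_11 {D K r : ℕ} (hD : 0 < D) (hK : 0 < K) (hr : 0 < r) (hrD : r ≤ D)
    (A : Fin K → Matrix (Fin D) (Fin D) ℂ) (hA : ∀ k, (A k).IsHermitian)
    (Ustar : Matrix (Fin D) (Fin r) ℂ) (hUstar : frobNorm Ustar = 1)
    (δ : ℝ) (hδ0 : 0 ≤ δ) (hδ1 : δ < 1) (hRIP : IsRIP A (3 * r) δ)
    (yhat e : Fin K → ℝ)
    (he : ∀ k, (e k : ℂ) = (yhat k : ℂ) - Matrix.trace (A k * (Ustar * Ustarᴴ)))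
    (U : Matrix (Fin D) (Fin r) ℂ) (R : Matrix (Fin r) (Fin r) ℂ)
    (hRunit : Rᴴ * R = 1)
    (hRmin : ∀ R' : Matrix (Fin r) (Fin r) ℂ, R'ᴴ * R' = 1 →
      frobNorm (U - Ustar * R) ≤ frobNorm (U - Ustar * R'))
    (hclose : frobNorm (U - Ustar * R) ≤ sigmaMin Ustar / 4) :
    frobNorm (wGrad A yhat U) ^ 2 ≤
      25 / 8 * (1 + 2 * δ) ^ 2 * frobNorm (U * Uᴴ - Ustar * Ustarᴴ) ^ 2
        + 25 * (D : ℝ) ^ 2 / (8 * (K : ℝ) ^ 2) * specNorm (adjointMap A e) ^ 2 := by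
  set Z := U * Uᴴ - Ustar * Ustarᴴ with hZdef
  set MZ := ∑ k, Matrix.trace (A k * Z) • A k with hMZdef
  set s := specNorm (adjointMap A e) with hsdef
  set κ := (D : ℝ) / (K : ℝ) with hκdef
  have hκ0 : (0 : ℝ) < κ := div_pos (Nat.cast_pos.2 hD) (Nat.cast_pos.2 hK)
  -- gradient identity
  have hgrad : wGrad A yhat U = ((D : ℂ) / (K : ℂ)) • ((MZ - adjointMap A e) * U) := by
    rw [wGrad]
    congr 1
    have hco : ∀ k, Matrix.trace (A k * (U * Uᴴ)) - (yhat k : ℂ)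
        = Matrix.trace (A k * Z) - (e k : ℂ) := by
      intro k
      have h1 : Matrix.trace (A k * Z) =
          Matrix.trace (A k * (U * Uᴴ)) - Matrix.trace (A k * (Ustar * Ustarᴴ)) := by
        rw [hZdef, Matrix.mul_sub, Matrix.trace_sub]
      rw [h1, he k]
      ring
    calc ∑ k, (Matrix.trace (A k * (U * Uᴴ)) - (yhat k : ℂ)) • (A k * U)
        = ∑ k, ((Matrix.trace (A k * Z) - (e k : ℂ)) • A k) * U := by
          refine Finset.sum_congr rfl fun k _ => ?_
          rw [hco k, Matrix.smul_mul]
      _ = (∑ k, (Matrix.trace (A k * Z) - (e k : ℂ)) • A k) * U := by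
          rw [Matrix.sum_mul]
      _ = (MZ - adjointMap A e) * U := by
          rw [hMZdef, adjointMap, ← Finset.sum_sub_distrib]
          congr 1
          refine Finset.sum_congr rfl fun k _ => ?_
          rw [sub_smul]
  have hDK : ‖((D : ℂ) / (K : ℂ))‖ = κ := by
    rw [norm_div, hκdef]
    simp [Complex.norm_natCast]
  have hGnorm : frobNorm (wGrad A yhat U) = κ * frobNorm ((MZ - adjointMap A e) * U) := by
    rw [hgrad, frobNorm_smul, hDK]
  -- bound on frobNorm U
  have hσ : sigmaMin Ustar ≤ 1 := sigmaMin_le_one hr hUstar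
  have hUR : frobNorm (Ustar * R) = 1 := by
    rw [frobNorm_mul_unitary hRunit, hUstar]
  have hU54 : frobNorm U ≤ 5 / 4 := by
    have htri : frobNorm U ≤ frobNorm (U - Ustar * R) + frobNorm (Ustar * R) := by
      have hrepr : U = (U - Ustar * R) + Ustar * R := by abel
      calc frobNorm U = frobNorm ((U - Ustar * R) + Ustar * R) := by rw [← hrepr]
        _ ≤ frobNorm (U - Ustar * R) + frobNorm (Ustar * R) := frobNorm_add_le _ _
    rw [hUR] at htri
    linarith
  -- hermitian and rank facts for Z
  have hZh : Z.IsHermitian := by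
    show Zᴴ = Z
    rw [hZdef, Matrix.conjTranspose_sub, Matrix.conjTranspose_mul, Matrix.conjTranspose_mul,
      Matrix.conjTranspose_conjTranspose, Matrix.conjTranspose_conjTranspose]
  have hZrank : Z.rank ≤ 2 * r := by
    have h1 : (U * Uᴴ).rank ≤ r :=
      le_trans (Matrix.rank_mul_le_left U Uᴴ) (Matrix.rank_le_width U)
    have h2 : (Ustar * Ustarᴴ).rank ≤ r :=
      le_trans (Matrix.rank_mul_le_left Ustar Ustarᴴ) (Matrix.rank_le_width Ustar)
    have h3 := matRank_sub_le (U * Uᴴ) (Ustar * Ustarᴴ)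
    rw [hZdef]
    omega
  have hMZb : κ * specNorm MZ ≤ (1 + 2 * δ) * frobNorm Z :=
    specM_le hD hK hr hA hδ0 hRIP hZh hZrank
  -- norms are nonneg
  have hs0 : 0 ≤ s := by rw [hsdef, specNorm_eq]; exact norm_nonneg _
  have hMZ0 : 0 ≤ specNorm MZ := by rw [specNorm_eq]; exact norm_nonneg _
  have hZ0 : 0 ≤ frobNorm Z := frobNorm_nonneg _
  have hU0 : 0 ≤ frobNorm U := frobNorm_nonneg _
  have hG0 : 0 ≤ frobNorm (wGrad A yhat U) := frobNorm_nonneg _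
  -- main chain
  set a := (1 + 2 * δ) * frobNorm Z with hadef
  set b := κ * s with hbdef
  have ha0 : 0 ≤ a := mul_nonneg (by linarith) hZ0
  have hb0 : 0 ≤ b := mul_nonneg hκ0.le hs0
  have hfrob1 : frobNorm ((MZ - adjointMap A e) * U) ≤ (specNorm MZ + s) * frobNorm U := by
    calc frobNorm ((MZ - adjointMap A e) * U)
        = frobNorm (MZ * U - adjointMap A e * U) := by rw [Matrix.sub_mul]
      _ ≤ frobNorm (MZ * U) + frobNorm (adjointMap A e * U) := frobNorm_sub_le _ _
      _ ≤ specNorm MZ * frobNorm U + s * frobNorm U :=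
          add_le_add (frobNorm_mul_le _ _) (frobNorm_mul_le _ _)
      _ = (specNorm MZ + s) * frobNorm U := by ring
  have hx : κ * (specNorm MZ + s) ≤ a + b := by
    rw [mul_add]
    exact add_le_add hMZb le_rfl
  have hGle2 : frobNorm (wGrad A yhat U) ≤ (a + b) * (5 / 4) := by
    calc frobNorm (wGrad A yhat U) = κ * frobNorm ((MZ - adjointMap A e) * U) := hGnorm
      _ ≤ κ * ((specNorm MZ + s) * frobNorm U) :=
          mul_le_mul_of_nonneg_left hfrob1 hκ0.le
      _ = (κ * (specNorm MZ + s)) * frobNorm U := by ring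
      _ ≤ (a + b) * (5 / 4) := by
          apply mul_le_mul hx hU54 hU0 (by linarith)
  have key : frobNorm (wGrad A yhat U) ^ 2 ≤ 25 / 8 * a ^ 2 + 25 / 8 * b ^ 2 := by
    nlinarith [hGle2, hG0, ha0, hb0, sq_nonneg (a - b)]
  calc frobNorm (wGrad A yhat U) ^ 2 ≤ 25 / 8 * a ^ 2 + 25 / 8 * b ^ 2 := key
    _ = 25 / 8 * (1 + 2 * δ) ^ 2 * frobNorm Z ^ 2
        + 25 * (D : ℝ) ^ 2 / (8 * (K : ℝ) ^ 2) * s ^ 2 := by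
        rw [hadef, hbdef, hκdef]
        ring
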